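/- With notation as before (K totally real of degree d, weights r, S₁ = {σ : r_σ > 0}, weighted norm ‖·‖_r, and ε ≤ 1), define the height H(q) = max_{σ ∈ S₁} |σ(q)| · ‖θ(q)‖_r^{r_σ} for q ∈ O_K(r,ε). Then for all q ∈ O_K(r,ε): ‖θ(q)‖_r^{1/d} ≤ H(q). -/

import Mathlib

open scoped NumberField
open Classical

noncomputable section

variable (K : Type) [Field K] [NumberField K]

/-- The Galois embedding `θ : K → ∏_{σ ∈ S} ℝ`, `θ(p) = (σ(p))_σ`. -/
def galoisEmbed (p : K) : (K →+* ℝ) → ℝ := fun σ => σ p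

/-- The finset `S₁` of embeddings with positive weight `r_σ > 0`. -/
def posWeights (r : (K →+* ℝ) → ℝ) : Finset (K →+* ℝ) :=
  Finset.univ.filter fun σ => 0 < r σ

/-- The weighted `r`-norm `‖x‖_r = max_{σ ∈ S₁} |x_σ|^{1/r_σ}`. -/
def rnorm (r : (K →+* ℝ) → ℝ) (hS₁ : (posWeights K r).Nonempty)
    (x : (K →+* ℝ) → ℝ) : ℝ :=
  (posWeights K r).sup' hS₁ fun σ => |x σ| ^ (1 / r σ)

/-- The set `𝓞_K(r,ε)` of nonzero integers `q` with `|σ(q)| ≤ ε` for all `σ ∈ S₂`. -/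
def OKre (r : (K →+* ℝ) → ℝ) (ε : ℝ) : Set (𝓞 K) :=
  {q | q ≠ 0 ∧ ∀ σ : K →+* ℝ, ¬ 0 < r σ → |σ (q : K)| ≤ ε}

/-- The height `H(q) = max_{σ ∈ S₁} |σ(q)|·‖θ(q)‖_r^{r_σ}`. -/
def height (r : (K →+* ℝ) → ℝ) (hS₁ : (posWeights K r).Nonempty) (q : 𝓞 K) : ℝ :=
  (posWeights K r).sup' hS₁ fun σ =>
    |σ (q : K)| * (rnorm K r hS₁ (galoisEmbed K (q : K))) ^ (r σ)

end

theorem norm_prod_aux (K : Type) [Field K] [NumberField K]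
    (htotallyreal : Fintype.card (K →+* ℝ) = Module.finrank ℚ K)
    (q : 𝓞 K) (hq : q ≠ 0) :
    (1 : ℝ) ≤ ∏ σ : K →+* ℝ, |σ (q : K)| := by
  have h1 : (1 : ℝ) ≤ |Algebra.norm ℚ (q : K)| := by
    rw [← Algebra.coe_norm_int, ← Int.cast_one, ← Int.cast_abs, Rat.cast_intCast, Int.cast_le]
    exact Int.one_le_abs (Algebra.norm_ne_zero_iff.mpr hq)
  have h2 : |(Algebra.norm ℚ (q : K) : ℝ)| = ∏ τ : K →+* ℂ, ‖τ (q : K)‖ := by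
    have := congr_arg (fun z : ℂ => ‖z‖)
      (Algebra.norm_eq_prod_embeddings ℚ ℂ (x := (q : K)))
    rw [norm_prod] at this
    rw [Fintype.prod_equiv (RingHom.equivRatAlgHom K ℂ)
      (fun τ : K →+* ℂ => ‖τ (q : K)‖)
      (fun φ : K →ₐ[ℚ] ℂ => ‖φ (q : K)‖)
      (fun _ => by simp [RingHom.equivRatAlgHom_apply]), ← this]
    rw [eq_ratCast, ← Real.norm_eq_abs, ← Complex.norm_real, Complex.ofReal_ratCast]
  have hinj : Function.Injective (fun σ : K →+* ℝ => Complex.ofRealHom.comp σ) := by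
    intro σ₁ σ₂ h
    ext x
    have := congr_arg (fun g : K →+* ℂ => g x) h
    simpa using Complex.ofReal_injective this
  have hbij : Function.Bijective (fun σ : K →+* ℝ => Complex.ofRealHom.comp σ) := by
    rw [Fintype.bijective_iff_injective_and_card]
    exact ⟨hinj, by rw [htotallyreal, NumberField.Embeddings.card K ℂ]⟩
  have h3 : ∏ τ : K →+* ℂ, ‖τ (q : K)‖ = ∏ σ : K →+* ℝ, |σ (q : K)| := by
    rw [← Fintype.prod_bijective _ hbij
      (fun σ : K →+* ℝ => |σ (q : K)|) (fun τ : K →+* ℂ => ‖τ (q : K)‖)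
      (fun σ => by simp [Complex.norm_real])]
  calc (1:ℝ) ≤ |(Algebra.norm ℚ (q : K) : ℝ)| := by exact_mod_cast h1
    _ = _ := by rw [h2, h3]

/-- For all `q ∈ 𝓞_K(r,ε)` (with `ε ≤ 1`): `‖θ(q)‖_r^{1/d} ≤ H(q)`,
where `d = [K : ℚ]` is the number of real embeddings of the totally real field `K`. -/
theorem rnorm_rpow_le_height (K : Type) [Field K] [NumberField K]
    (htotallyreal : Fintype.card (K →+* ℝ) = Module.finrank ℚ K)
    (r : (K →+* ℝ) → ℝ) (hr0 : ∀ σ, 0 ≤ r σ) (hr1 : ∑ σ : K →+* ℝ, r σ = 1)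
    (hS₁ : (posWeights K r).Nonempty)
    (ε : ℝ) (hε : 0 < ε) (hε1 : ε ≤ 1)
    (q : 𝓞 K) (hq : q ∈ OKre K r ε) :
    (rnorm K r hS₁ (galoisEmbed K (q : K))) ^ ((1 : ℝ) / (Fintype.card (K →+* ℝ))) ≤
      height K r hS₁ q := by
  obtain ⟨hq0, hq2⟩ := hq
  set N := rnorm K r hS₁ (galoisEmbed K (q : K)) with hNdef
  set H := height K r hS₁ q with hHdef
  obtain ⟨σ₀, hσ₀⟩ := id hS₁
  have hqK : (q : K) ≠ 0 := by simpa using hq0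
  have hge : ∀ σ ∈ posWeights K r, |σ (q : K)| ^ (1 / r σ) ≤ N :=
    fun σ hσ => Finset.le_sup' (fun σ => |galoisEmbed K (q : K) σ| ^ (1 / r σ)) hσ
  have hNpos : 0 < N :=
    lt_of_lt_of_le (Real.rpow_pos_of_pos (abs_pos.mpr (map_ne_zero σ₀ |>.mpr hqK)) (1 / r σ₀))
      (hge σ₀ hσ₀)
  -- each |σ q| is bounded by N ^ r σ on S₁
  have hterm : ∀ σ ∈ posWeights K r, |σ (q : K)| ≤ N ^ (r σ) := by
    intro σ hσ
    have hrσ : 0 < r σ := (Finset.mem_filter.mp hσ).2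
    calc |σ (q : K)| = (|σ (q : K)| ^ (1 / r σ)) ^ (r σ) := by
          rw [← Real.rpow_mul (abs_nonneg _), one_div, inv_mul_cancel₀ hrσ.ne', Real.rpow_one]
      _ ≤ N ^ (r σ) := Real.rpow_le_rpow (Real.rpow_nonneg (abs_nonneg _) _) (hge σ hσ) hrσ.le
  -- the product over S₁ of |σ q| is at least 1
  have hprodS1 : 1 ≤ ∏ σ ∈ posWeights K r, |σ (q : K)| := by
    have htot := norm_prod_aux K htotallyreal q hq0
    rw [← Finset.prod_filter_mul_prod_filter_not Finset.univ (fun σ => 0 < r σ)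
      (fun σ => |σ (q : K)|)] at htot
    have h2le : ∏ σ ∈ Finset.univ.filter (fun σ => ¬ 0 < r σ), |σ (q : K)| ≤ 1 :=
      Finset.prod_le_one (fun σ _ => abs_nonneg _)
        (fun σ hσ => le_trans (hq2 σ (Finset.mem_filter.mp hσ).2) hε1)
    have h1nonneg : 0 ≤ ∏ σ ∈ posWeights K r, |σ (q : K)| :=
      Finset.prod_nonneg fun σ _ => abs_nonneg _
    calc (1:ℝ) ≤ _ := htot
      _ ≤ (∏ σ ∈ posWeights K r, |σ (q : K)|) * 1 :=
          mul_le_mul_of_nonneg_left h2le h1nonneg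
      _ = _ := mul_one _
  -- the weights on S₁ sum to 1
  have hsum : ∑ σ ∈ posWeights K r, r σ = 1 := by
    rw [← hr1]
    exact Finset.sum_subset (Finset.subset_univ _)
      (fun σ _ hσ => le_antisymm (not_lt.mp (by simpa [posWeights] using hσ)) (hr0 σ))
  have hprodrpow : ∏ σ ∈ posWeights K r, N ^ (r σ) = N := by
    rw [← Real.rpow_sum_of_pos hNpos, hsum, Real.rpow_one]
  -- N is at most the product of the height terms
  have hNle : N ≤ ∏ σ ∈ posWeights K r, (|σ (q : K)| * N ^ (r σ)) := by
    rw [Finset.prod_mul_distrib, hprodrpow]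
    calc N = 1 * N := (one_mul N).symm
      _ ≤ (∏ σ ∈ posWeights K r, |σ (q : K)|) * N :=
          mul_le_mul_of_nonneg_right hprodS1 hNpos.le
  -- each height term is at most H, and is nonnegative
  have htermle : ∀ σ ∈ posWeights K r, |σ (q : K)| * N ^ (r σ) ≤ H :=
    fun σ hσ => Finset.le_sup'
      (fun σ => |σ (q : K)| * (rnorm K r hS₁ (galoisEmbed K (q : K))) ^ (r σ)) hσ
  have htermnonneg : ∀ σ ∈ posWeights K r, 0 ≤ |σ (q : K)| * N ^ (r σ) :=
    fun σ _ => mul_nonneg (abs_nonneg _) (Real.rpow_nonneg hNpos.le _)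
  have hHnonneg : 0 ≤ H := le_trans (htermnonneg σ₀ hσ₀) (htermle σ₀ hσ₀)
  -- N ≤ H ^ |S₁|
  have hcard : N ≤ H ^ (posWeights K r).card := by
    calc N ≤ ∏ σ ∈ posWeights K r, (|σ (q : K)| * N ^ (r σ)) := hNle
      _ ≤ ∏ _σ ∈ posWeights K r, H := Finset.prod_le_prod htermnonneg htermle
      _ = H ^ (posWeights K r).card := Finset.prod_const H
  have hN1 : 1 ≤ N := by
    calc (1:ℝ) ≤ ∏ σ ∈ posWeights K r, |σ (q : K)| := hprodS1
      _ ≤ ∏ σ ∈ posWeights K r, N ^ (r σ) :=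
          Finset.prod_le_prod (fun σ _ => abs_nonneg _) hterm
      _ = N := hprodrpow
  have hH1 : 1 ≤ H := by
    by_contra h
    push_neg at h
    have hc : (posWeights K r).card ≠ 0 :=
      Finset.card_ne_zero_of_mem hσ₀
    have : H ^ (posWeights K r).card < 1 := pow_lt_one₀ hHnonneg h hc
    linarith [le_trans hN1 hcard]
  set d := Fintype.card (K →+* ℝ) with hd
  have hdpos : 0 < d := Fintype.card_pos_iff.mpr ⟨σ₀⟩
  have hcardle : (posWeights K r).card ≤ d := Finset.card_le_univ _
  have hNd : N ≤ H ^ d :=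
    le_trans hcard (pow_le_pow_right₀ hH1 hcardle)
  have hdR : (0:ℝ) < (d:ℝ) := by exact_mod_cast hdpos
  calc N ^ ((1:ℝ) / (d:ℝ)) ≤ (H ^ d) ^ ((1:ℝ) / (d:ℝ)) :=
        Real.rpow_le_rpow hNpos.le hNd (by positivity)
    _ = H := by
        rw [← Real.rpow_natCast H d, ← Real.rpow_mul hHnonneg, mul_one_div,
          div_self hdR.ne', Real.rpow_one]
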